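/- arXiv:1203.5762 — 2 statements merged into one kernel-verified Lean document; each statement's English description precedes it below -/
import Mathlib

section
/- (Theorem 1, diversity-order form.) Let K ≥ 0 and define the Rician density on ℂ by f_K(h) = ((K+1)/π) · exp(−(K+1)·|h − √(K/(K+1))|²), and let Q(x) = ∫_x^∞ (1/√(2π)) · exp(−u²/2) du be the Gaussian tail function. Let Δa, Δb ∈ ℂ be nonzero and let δ > 0. For ρ > 0 define P(ρ) = ∫∫_{{(h_A, h_B) ∈ ℂ² : h_A ≠ 0 and |h_B/h_A + Δa/Δb| ≥ δ}} Q(√ρ · |h_A·Δa + h_B·Δb| / √2) · f_K(h_A) · f_K(h_B) dh_A dh_B. Then there exists a constant C > 0 (depending on K, Δa, Δb, δ) such that P(ρ) ≤ C/ρ² for all ρ ≥ 1. -/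
open MeasureTheory Set

/-- The Rician density with Rician factor `K` on `ℂ`:
`f_K(h) = ((K+1)/π) exp(−(K+1)|h − √(K/(K+1))|²)`. -/
noncomputable def ricianDensity (K : ℝ) (h : ℂ) : ℝ :=
  ((K + 1) / Real.pi) *
    Real.exp (-(K + 1) * ‖h - (Real.sqrt (K / (K + 1)) : ℂ)‖ ^ 2)

/-- The Gaussian tail function `Q(x) = ∫_x^∞ (1/√(2π)) exp(−u²/2) du`. -/
noncomputable def gaussianQ (x : ℝ) : ℝ :=
  ∫ u in Set.Ioi x, (1 / Real.sqrt (2 * Real.pi)) * Real.exp (-u ^ 2 / 2)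

open Real in
lemma gaussianQ_le {x : ℝ} (hx : 0 ≤ x) : gaussianQ x ≤ 2 * rexp (-x ^ 2 / 4) := by
  have hc : (0:ℝ) ≤ 1 / Real.sqrt (2 * π) := by positivity
  have hint : Integrable (fun u : ℝ => rexp (-(1/4) * u ^ 2)) :=
    integrable_exp_neg_mul_sq (by norm_num)
  have h1 : gaussianQ x ≤ ∫ u in Ioi x,
      (1 / Real.sqrt (2 * π)) * (rexp (-x ^ 2 / 4) * rexp (-(1/4) * u ^ 2)) := by
    unfold gaussianQ
    apply setIntegral_mono_on
    · have : (fun u : ℝ => 1 / Real.sqrt (2*π) * rexp (-u ^ 2 / 2))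
          = fun u : ℝ => 1 / Real.sqrt (2*π) * rexp (-(1/2) * u ^ 2) := by
        funext u; rw [show -u^2/2 = -(1/2) * u^2 by ring]
      rw [this]
      exact ((integrable_exp_neg_mul_sq (by norm_num)).const_mul _).integrableOn
    · exact ((hint.const_mul _).const_mul _).integrableOn
    · exact measurableSet_Ioi
    · intro u hu
      have hxu : x < u := hu
      have h2 : x ^ 2 ≤ u ^ 2 := by nlinarith
      rw [← Real.exp_add]
      gcongr
      linarith
  have h2 : (∫ u in Ioi x,
      (1 / Real.sqrt (2 * π)) * (rexp (-x ^ 2 / 4) * rexp (-(1/4) * u ^ 2)))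
      ≤ ∫ u : ℝ, (1 / Real.sqrt (2 * π)) * (rexp (-x ^ 2 / 4) * rexp (-(1/4) * u ^ 2)) := by
    apply setIntegral_le_integral ((hint.const_mul _).const_mul _)
    filter_upwards with u; positivity
  have h3 : (∫ u : ℝ, (1 / Real.sqrt (2 * π)) * (rexp (-x ^ 2 / 4) * rexp (-(1/4) * u ^ 2)))
      = (1 / Real.sqrt (2 * π)) * rexp (-x ^ 2 / 4) * Real.sqrt (π / (1/4)) := by
    simp_rw [MeasureTheory.integral_const_mul, integral_gaussian]
    ring
  have h4 : (1 / Real.sqrt (2 * π)) * Real.sqrt (π / (1/4)) ≤ 2 := by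
    rw [div_mul_eq_mul_div, one_mul, div_le_iff₀ (by positivity)]
    calc Real.sqrt (π / (1/4)) ≤ Real.sqrt (4 * (2*π)) :=
          Real.sqrt_le_sqrt (by nlinarith [Real.pi_pos])
      _ = 2 * Real.sqrt (2*π) := by
          rw [show (4:ℝ) * (2*π) = 2^2 * (2*π) by ring, Real.sqrt_mul (by positivity),
            Real.sqrt_sq (by norm_num)]
  calc gaussianQ x ≤ _ := h1.trans h2
    _ = (1 / Real.sqrt (2 * π)) * rexp (-x ^ 2 / 4) * Real.sqrt (π / (1/4)) := h3
    _ ≤ 2 * rexp (-x ^ 2 / 4) := by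
        nlinarith [Real.exp_pos (-x^2/4), h4, Real.sqrt_nonneg (π/(1/4)), hc]

lemma gaussianQ_nonneg (x : ℝ) : 0 ≤ gaussianQ x := by
  apply integral_nonneg; intro u; positivity

lemma ricianDensity_nonneg {K : ℝ} (hK : 0 ≤ K) (h : ℂ) : 0 ≤ ricianDensity K h := by
  apply mul_nonneg (div_nonneg (by linarith) Real.pi_pos.le) (Real.exp_pos _).le

lemma ricianDensity_le {K : ℝ} (hK : 0 ≤ K) (h : ℂ) :
    ricianDensity K h ≤ (K + 1) / Real.pi := by
  have h1 : Real.exp (-(K + 1) * (‖h - (Real.sqrt (K / (K + 1)) : ℂ)‖) ^ 2) ≤ 1 := by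
    rw [Real.exp_le_one_iff]
    nlinarith [sq_nonneg (‖h - (Real.sqrt (K / (K + 1)) : ℂ)‖)]
  calc ricianDensity K h ≤ ((K + 1) / Real.pi) * 1 := by
        apply mul_le_mul_of_nonneg_left h1 (div_nonneg (by linarith) Real.pi_pos.le)
    _ = (K + 1) / Real.pi := mul_one _

noncomputable def shearEquiv (s : ℂ) : (ℂ × ℂ) ≃ᵐ (ℂ × ℂ) where
  toFun p := (p.1, p.2 + s * p.1)
  invFun p := (p.1, p.2 - s * p.1)
  left_inv p := by simp
  right_inv p := by simp
  measurable_toFun := by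
    exact measurable_fst.prodMk (measurable_snd.add (measurable_fst.const_mul s))
  measurable_invFun := by
    exact measurable_fst.prodMk (measurable_snd.sub (measurable_fst.const_mul s))

lemma shear_measurePreserving (s : ℂ) :
    MeasurePreserving (fun p : ℂ × ℂ => (p.1, p.2 + s * p.1)) volume volume := by
  rw [Measure.volume_eq_prod]
  exact (MeasurePreserving.id volume).skew_product (g := fun x y => y + s * x)
    (measurable_snd.add (measurable_fst.const_mul s))
    (Filter.Eventually.of_forall fun x => map_add_right_eq_self volume (s * x))

open Real in
theorem gauss_int_c {b : ℝ} (hb : 0 < b) : ∫ v : ℂ, rexp (-b * ‖v‖^2) = π / b := by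
  rw [GaussianFourier.integral_rexp_neg_mul_sq_norm hb]
  norm_num [Complex.finrank_real_complex]

open Real in
theorem gauss_integrable_c {b : ℝ} (hb : 0 < b) :
    Integrable (fun v : ℂ => rexp (-b * ‖v‖^2)) := by
  have h := (GaussianFourier.integrable_cexp_neg_mul_sq_norm_add (V := ℂ)
    (b := (b:ℂ)) (by simpa) 0 0).norm
  refine h.congr (Filter.Eventually.of_forall fun v => ?_)
  simp only [zero_mul, add_zero, Complex.norm_exp]
  norm_num [← Complex.ofReal_pow]

open Real in
theorem shearGauss_integrable {a b : ℝ} (ha : 0 < a) (hb : 0 < b) (s : ℂ) :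
    Integrable (fun p : ℂ × ℂ => rexp (-a * ‖p.1‖^2) * rexp (-b * ‖p.2 + s * p.1‖^2)) := by
  have hG : Integrable (fun p : ℂ × ℂ => rexp (-a * ‖p.1‖^2) * rexp (-b * ‖p.2‖^2)) := by
    rw [Measure.volume_eq_prod]
    exact (gauss_integrable_c ha).mul_prod (gauss_integrable_c hb)
  exact ((shear_measurePreserving s).integrable_comp_emb
    (shearEquiv s).measurableEmbedding).mpr hG

open Real in
theorem shearGauss_integral {a b : ℝ} (ha : 0 < a) (hb : 0 < b) (s : ℂ) :
    ∫ p : ℂ × ℂ, rexp (-a * ‖p.1‖^2) * rexp (-b * ‖p.2 + s * p.1‖^2)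
      = (π / a) * (π / b) := by
  have h := (shear_measurePreserving s).integral_comp (shearEquiv s).measurableEmbedding
    (fun p : ℂ × ℂ => rexp (-a * ‖p.1‖^2) * rexp (-b * ‖p.2‖^2))
  rw [show (fun p : ℂ × ℂ => rexp (-a * ‖p.1‖^2) * rexp (-b * ‖p.2 + s * p.1‖^2))
    = fun p : ℂ × ℂ => rexp (-a * ‖(p.1, p.2 + s*p.1).1‖^2)
        * rexp (-b * ‖(p.1, p.2 + s*p.1).2‖^2) from rfl, h,
    Measure.volume_eq_prod,
    integral_prod_mul (fun x : ℂ => rexp (-a * ‖x‖^2)) (fun y : ℂ => rexp (-b * ‖y‖^2)),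
    gauss_int_c ha, gauss_int_c hb]

/-- Theorem 1 of the paper, diversity-order form: with adaptive
network coding, the pairwise error probability associated with a removable singular
fade state `s = −Δa/Δb`, integrated over the region of fade states at distance at
least `δ` from `s`, decreases as `SNR⁻²`. -/
theorem adaptive_network_coding_pairwise_error_snr_sq
    (K : ℝ) (hK : 0 ≤ K) (Δa Δb : ℂ) (hΔa : Δa ≠ 0) (hΔb : Δb ≠ 0)
    (δ : ℝ) (hδ : 0 < δ) :
    ∃ C : ℝ, 0 < C ∧ ∀ ρ : ℝ, 1 ≤ ρ →
      (∫ p in {p : ℂ × ℂ | p.1 ≠ 0 ∧ δ ≤ ‖p.2 / p.1 + Δa / Δb‖},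
          gaussianQ (Real.sqrt ρ * ‖p.1 * Δa + p.2 * Δb‖ / Real.sqrt 2) *
            ricianDensity K p.1 * ricianDensity K p.2) ≤ C / ρ ^ 2 := by
  set M : ℝ := (K + 1) / Real.pi with hM_def
  have hM : 0 < M := by
    apply div_pos (by linarith) Real.pi_pos
  set s : ℂ := Δa / Δb with hs_def
  have hB : 0 < ‖Δb‖ := by
    simpa [norm_pos_iff] using hΔb
  set a : ℝ := δ^2 * (‖Δb‖)^2 / 16 with ha_def
  set b : ℝ := (‖Δb‖)^2 / 16 with hb_def
  have ha : 0 < a := by positivity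
  have hb : 0 < b := by positivity
  refine ⟨2 * M^2 * ((Real.pi / a) * (Real.pi / b)), by positivity, fun ρ hρ => ?_⟩
  have hρ0 : 0 < ρ := by linarith
  have hρa : 0 < ρ * a := by positivity
  have hρb : 0 < ρ * b := by positivity
  -- the dominating function
  set g : ℂ × ℂ → ℝ := fun p =>
    (2 * M^2) * (Real.exp (-(ρ*a) * ‖p.1‖^2) * Real.exp (-(ρ*b) * ‖p.2 + s * p.1‖^2))
    with hg_def
  have hg_int : Integrable g := ((shearGauss_integrable hρa hρb s).const_mul _)
  have hS : MeasurableSet {p : ℂ × ℂ | p.1 ≠ 0 ∧ δ ≤ ‖p.2 / p.1 + Δa / Δb‖} := by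
    have hset : {p : ℂ × ℂ | p.1 ≠ 0 ∧ δ ≤ ‖p.2 / p.1 + Δa / Δb‖}
        = (Prod.fst ⁻¹' ({0}ᶜ : Set ℂ)) ∩
          ((fun p : ℂ × ℂ => ‖p.2 / p.1 + Δa / Δb‖) ⁻¹' Ici δ) := by
      ext p; simp [mem_setOf_eq]
    rw [hset]
    exact (measurable_fst (measurableSet_singleton 0).compl).inter
      ((continuous_norm.measurable.comp
        ((measurable_snd.div measurable_fst).add_const _)) measurableSet_Ici)
  rw [← integral_indicator hS]
  have hf0 : 0 ≤ᵐ[volume] ({p : ℂ × ℂ | p.1 ≠ 0 ∧ δ ≤ ‖p.2 / p.1 + Δa / Δb‖}.indicator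
      fun p => gaussianQ (Real.sqrt ρ * ‖p.1 * Δa + p.2 * Δb‖ / Real.sqrt 2) *
        ricianDensity K p.1 * ricianDensity K p.2) := by
    filter_upwards with p
    apply indicator_nonneg
    intro q _
    exact mul_nonneg (mul_nonneg (gaussianQ_nonneg _) (ricianDensity_nonneg hK _))
      (ricianDensity_nonneg hK _)
  have hfg : ({p : ℂ × ℂ | p.1 ≠ 0 ∧ δ ≤ ‖p.2 / p.1 + Δa / Δb‖}.indicator
      fun p => gaussianQ (Real.sqrt ρ * ‖p.1 * Δa + p.2 * Δb‖ / Real.sqrt 2) *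
        ricianDensity K p.1 * ricianDensity K p.2) ≤ᵐ[volume] g := by
    filter_upwards with p
    rcases em (p ∈ {p : ℂ × ℂ | p.1 ≠ 0 ∧ δ ≤ ‖p.2 / p.1 + Δa / Δb‖}) with hp | hp
    · rw [indicator_of_mem hp]
      obtain ⟨hp1, hp2⟩ := hp
      -- key algebraic identities
      have key : p.1 * Δa + p.2 * Δb = Δb * (p.2 + s * p.1) := by
        rw [hs_def]; field_simp; ring
      set W : ℝ := ‖p.2 + s * p.1‖ with hW_def
      have hW0 : 0 ≤ W := norm_nonneg _
      have hA : ‖p.1 * Δa + p.2 * Δb‖ = ‖Δb‖ * W := by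
        rw [key, norm_mul]
      have h1 : δ * ‖p.1‖ ≤ W := by
        have h := mul_le_mul_of_nonneg_right hp2 (norm_nonneg p.1)
        rwa [← norm_mul, add_mul, div_mul_cancel₀ _ hp1] at h
      -- bound on Q
      have harg : 0 ≤ Real.sqrt ρ * ‖p.1 * Δa + p.2 * Δb‖ / Real.sqrt 2 := by
        positivity
      have hQ := gaussianQ_le harg
      have hsq : (Real.sqrt ρ * ‖p.1 * Δa + p.2 * Δb‖ / Real.sqrt 2)^2
          = ρ * (‖p.1 * Δa + p.2 * Δb‖)^2 / 2 := by
        rw [div_pow, mul_pow, Real.sq_sqrt hρ0.le, Real.sq_sqrt (by norm_num : (0:ℝ) ≤ 2)]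
      have hexp : Real.exp (-(Real.sqrt ρ * ‖p.1 * Δa + p.2 * Δb‖ / Real.sqrt 2)^2/4)
          ≤ Real.exp (-(ρ*a) * ‖p.1‖^2) * Real.exp (-(ρ*b) * ‖p.2 + s * p.1‖^2) := by
        rw [← Real.exp_add, Real.exp_le_exp, hsq, hA]
        have e1 : ‖p.1‖ = ‖p.1‖ := rfl
        have e2 : ‖p.2 + s * p.1‖ = W := rfl
        rw [e1, e2, ha_def, hb_def]
        have hap1 : (0:ℝ) ≤ ‖p.1‖ := norm_nonneg _
        have h1sq : (δ * ‖p.1‖)^2 ≤ W^2 := pow_le_pow_left₀ (by positivity) h1 2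
        have h1sq' := mul_le_mul_of_nonneg_left h1sq
          (mul_nonneg hρ0.le (sq_nonneg (‖Δb‖)))
        nlinarith [h1sq', hρ0.le, sq_nonneg (‖Δb‖), sq_nonneg W,
          mul_nonneg hρ0.le (mul_nonneg (sq_nonneg (‖Δb‖)) (sq_nonneg W))]
      have hr1 := ricianDensity_le hK p.1
      have hr2 := ricianDensity_le hK p.2
      have hr1n := ricianDensity_nonneg hK p.1
      have hr2n := ricianDensity_nonneg hK p.2
      calc gaussianQ (Real.sqrt ρ * ‖p.1 * Δa + p.2 * Δb‖ / Real.sqrt 2) *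
            ricianDensity K p.1 * ricianDensity K p.2
          ≤ (2 * Real.exp (-(Real.sqrt ρ * ‖p.1 * Δa + p.2 * Δb‖ / Real.sqrt 2)^2/4))
              * M * M := by
            apply mul_le_mul _ hr2 hr2n (by positivity)
            exact mul_le_mul hQ hr1 hr1n (by positivity)
        _ ≤ (2 * (Real.exp (-(ρ*a) * ‖p.1‖^2) * Real.exp (-(ρ*b) * ‖p.2 + s * p.1‖^2)))
              * M * M := by
            have h2 : (2:ℝ) * Real.exp (-(Real.sqrt ρ * ‖p.1 * Δa + p.2 * Δb‖ / Real.sqrt 2)^2/4)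
                ≤ 2 * (Real.exp (-(ρ*a) * ‖p.1‖^2) * Real.exp (-(ρ*b) * ‖p.2 + s * p.1‖^2)) := by
              linarith
            exact mul_le_mul_of_nonneg_right (mul_le_mul_of_nonneg_right h2 hM.le) hM.le
        _ = g p := by rw [hg_def]; ring
    · rw [indicator_of_notMem hp]
      have : 0 < g p := by
        rw [hg_def]; positivity
      exact this.le
  calc (∫ p, ({p : ℂ × ℂ | p.1 ≠ 0 ∧ δ ≤ ‖p.2 / p.1 + Δa / Δb‖}.indicator
      fun p => gaussianQ (Real.sqrt ρ * ‖p.1 * Δa + p.2 * Δb‖ / Real.sqrt 2) *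
        ricianDensity K p.1 * ricianDensity K p.2) p)
      ≤ ∫ p, g p := integral_mono_of_nonneg hf0 hg_int hfg
    _ = (2 * M^2) * ((Real.pi / (ρ*a)) * (Real.pi / (ρ*b))) := by
        rw [hg_def, MeasureTheory.integral_const_mul, shearGauss_integral hρa hρb s]
    _ = (2 * M^2 * ((Real.pi / a) * (Real.pi / b))) / ρ^2 := by
        have hd : (Real.pi/(ρ*a))*(Real.pi/(ρ*b)) = ((Real.pi/a)*(Real.pi/b))/ρ^2 := by
          rw [div_mul_div_comm, div_mul_div_comm, div_div]
          congr 1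
          ring
        rw [hd]
        ring
end

section
/- Let K ≥ 0 with Rician density f_K(h) = ((K+1)/π) · exp(−(K+1)·|h − √(K/(K+1))|²) on ℂ, let Q(x) = ∫_x^∞ (1/√(2π)) · exp(−u²/2) du be the Gaussian tail function, and let a, b ∈ ℂ with S := |a|² + |b|² > 0. Then for every ρ > 0, ∫_ℂ ∫_ℂ Q(√ρ · |a·h_A + b·h_B| / √2) · f_K(h_A) · f_K(h_B) dh_A dh_B ≤ ((K+1)/(K+1 + ρ·S/4)) · exp(−K·ρ·|a + b|²/(4·(K+1) + ρ·S)). -/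
open MeasureTheory Set

lemma shifted_gauss (c r : ℝ) (hc : 0 < c) :
    ∫ x : ℝ, Real.exp (-c * (x - r) ^ 2) = Real.sqrt (Real.pi / c) := by
  rw [integral_sub_right_eq_self (fun x => Real.exp (-c * x ^ 2)) r]
  exact integral_gaussian c

lemma shifted_gauss_integrable (c r : ℝ) (hc : 0 < c) :
    Integrable (fun x : ℝ => Real.exp (-c * (x - r) ^ 2)) :=
  (integrable_exp_neg_mul_sq hc).comp_sub_right r

lemma complex_gauss_integral (c : ℝ) (hc : 0 < c) (w : ℂ) :
    ∫ h : ℂ, Real.exp (-c * ‖h - w‖ ^ 2) = Real.pi / c := by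
  have key : ∀ h : ℂ, Real.exp (-c * ‖h - w‖ ^ 2)
      = Real.exp (-c * (h.re - w.re) ^ 2) * Real.exp (-c * (h.im - w.im) ^ 2) := by
    intro h
    rw [← Real.exp_add, Complex.sq_norm, Complex.normSq_apply]
    simp only [Complex.sub_re, Complex.sub_im]
    ring_nf
  simp_rw [key]
  rw [← (Complex.volume_preserving_equiv_real_prod.symm
      Complex.measurableEquivRealProd).integral_comp'
      (fun h : ℂ => Real.exp (-c * (h.re - w.re) ^ 2) * Real.exp (-c * (h.im - w.im) ^ 2))]
  simp only [Complex.measurableEquivRealProd_symm_apply]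
  rw [MeasureTheory.Measure.volume_eq_prod, integral_prod_mul (fun x : ℝ => Real.exp (-c * (x - w.re) ^ 2)) (fun y : ℝ => Real.exp (-c * (y - w.im) ^ 2)),
    shifted_gauss c _ hc, shifted_gauss c _ hc]
  exact Real.mul_self_sqrt (le_of_lt (div_pos Real.pi_pos hc))

lemma complex_gauss_integrable (c : ℝ) (hc : 0 < c) (w : ℂ) :
    Integrable (fun h : ℂ => Real.exp (-c * ‖h - w‖ ^ 2)) := by
  have key : ∀ h : ℂ, Real.exp (-c * ‖h - w‖ ^ 2)
      = Real.exp (-c * (h.re - w.re) ^ 2) * Real.exp (-c * (h.im - w.im) ^ 2) := by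
    intro h
    rw [← Real.exp_add, Complex.sq_norm, Complex.normSq_apply]
    simp only [Complex.sub_re, Complex.sub_im]
    ring_nf
  simp_rw [key]
  have h2 : Integrable (fun p : ℝ × ℝ =>
      Real.exp (-c * (p.1 - w.re) ^ 2) * Real.exp (-c * (p.2 - w.im) ^ 2)) := by
    rw [MeasureTheory.Measure.volume_eq_prod]
    exact (shifted_gauss_integrable c w.re hc).mul_prod (shifted_gauss_integrable c w.im hc)
  have := (Complex.volume_preserving_equiv_real_prod.integrable_comp_emb
      Complex.measurableEquivRealProd.measurableEmbedding).2 h2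
  simpa [Function.comp_def, Complex.measurableEquivRealProd_apply] using this

lemma complete_square (lam t : ℝ) (hlam : 0 < lam) (ht : 0 ≤ t) (m : ℝ) (α β h : ℂ) :
    lam * ‖h - (m : ℂ)‖ ^ 2 + t * ‖α * h + β‖ ^ 2 =
      (lam + t * ‖α‖ ^ 2) *
        ‖h - ((lam + t * ‖α‖ ^ 2)⁻¹ : ℝ) •
          ((lam : ℂ) * (m : ℂ) - (t : ℂ) * (starRingEnd ℂ α) * β)‖ ^ 2 +
      lam * t * ‖(α * (m : ℂ) + β)‖ ^ 2 / (lam + t * ‖α‖ ^ 2) := by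
  have hc : (0:ℝ) < lam + t * ‖α‖ ^ 2 := by positivity
  have hc' : lam + t * ‖α‖ ^ 2 ≠ 0 := ne_of_gt hc
  have habs : (‖α‖) ^ 2 = α.re * α.re + α.im * α.im := by
    rw [Complex.sq_norm, Complex.normSq_apply]
  have hc2 : lam + t * (α.re * α.re + α.im * α.im) ≠ 0 := by rw [← habs]; exact hc'
  simp only [Complex.sq_norm, Complex.normSq_apply, Complex.sub_re, Complex.sub_im,
    Complex.add_re, Complex.add_im, Complex.mul_re, Complex.mul_im, Complex.smul_re,
    Complex.smul_im, Complex.ofReal_re, Complex.ofReal_im, Complex.conj_re, Complex.conj_im,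
    smul_eq_mul]
  field_simp [hc2]
  ring

lemma gauss_rician_integral (lam t : ℝ) (hlam : 0 < lam) (ht : 0 ≤ t) (m : ℝ) (α β : ℂ) :
    ∫ h : ℂ, Real.exp (-t * ‖α * h + β‖ ^ 2) *
        ((lam / Real.pi) * Real.exp (-lam * ‖h - (m : ℂ)‖ ^ 2)) =
      (lam / (lam + t * ‖α‖ ^ 2)) *
        Real.exp (-(lam * t * ‖α * (m : ℂ) + β‖ ^ 2) /
          (lam + t * ‖α‖ ^ 2)) := by
  have hc : (0:ℝ) < lam + t * ‖α‖ ^ 2 := by positivity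
  set c : ℝ := lam + t * ‖α‖ ^ 2 with hcdef
  set w : ℂ := (c⁻¹ : ℝ) • ((lam : ℂ) * (m : ℂ) - (t : ℂ) * (starRingEnd ℂ α) * β) with hwdef
  set d : ℝ := lam * t * ‖(α * (m : ℂ) + β)‖ ^ 2 / c with hddef
  have key : ∀ h : ℂ, Real.exp (-t * ‖α * h + β‖ ^ 2) *
      ((lam / Real.pi) * Real.exp (-lam * ‖h - (m : ℂ)‖ ^ 2)) =
      (lam / Real.pi) * Real.exp (-d) * Real.exp (-c * ‖h - w‖ ^ 2) := by
    intro h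
    have := complete_square lam t hlam ht m α β h
    rw [mul_comm, mul_assoc, ← Real.exp_add, mul_assoc, ← Real.exp_add]
    congr 1
    rw [Real.exp_eq_exp]
    rw [← hcdef, ← hwdef, ← hddef] at this
    linarith [this]
  simp_rw [key]
  rw [integral_const_mul, complex_gauss_integral c hc w, neg_div, ← hddef]
  field_simp

lemma gauss_rician_integrable (lam t : ℝ) (hlam : 0 < lam) (ht : 0 ≤ t) (m : ℝ) (α β : ℂ) :
    Integrable (fun h : ℂ => Real.exp (-t * ‖α * h + β‖ ^ 2) *
        ((lam / Real.pi) * Real.exp (-lam * ‖h - (m : ℂ)‖ ^ 2))) := by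
  have hg : Integrable (fun h : ℂ =>
      (lam / Real.pi) * Real.exp (-lam * ‖h - (m : ℂ)‖ ^ 2)) :=
    (complex_gauss_integrable lam hlam (m : ℂ)).const_mul _
  refine hg.mono' ?_ ?_
  · apply Continuous.aestronglyMeasurable
    have c1 : Continuous fun h : ℂ => ‖α * h + β‖ :=
      continuous_norm.comp (by continuity)
    have c2 : Continuous fun h : ℂ => ‖h - (m : ℂ)‖ :=
      continuous_norm.comp (by continuity)
    exact (Real.continuous_exp.comp (continuous_const.mul (c1.pow 2))).mul
      (continuous_const.mul (Real.continuous_exp.comp (continuous_const.mul (c2.pow 2))))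
  · filter_upwards with h
    have h1 : Real.exp (-t * ‖α * h + β‖ ^ 2) ≤ 1 := by
      apply Real.exp_le_one_iff.2
      have : (0:ℝ) ≤ t * ‖α * h + β‖ ^ 2 := by positivity
      linarith
    have h2 : (0:ℝ) ≤ (lam / Real.pi) * Real.exp (-lam * ‖h - (m : ℂ)‖ ^ 2) := by
      have := Real.pi_pos
      positivity
    rw [Real.norm_eq_abs, abs_of_nonneg (by positivity)]
    calc Real.exp (-t * ‖α * h + β‖ ^ 2) *
          ((lam / Real.pi) * Real.exp (-lam * ‖h - (m : ℂ)‖ ^ 2))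
        ≤ 1 * ((lam / Real.pi) * Real.exp (-lam * ‖h - (m : ℂ)‖ ^ 2)) :=
          mul_le_mul_of_nonneg_right h1 h2
      _ = _ := one_mul _

lemma gaussianQ_le_chernoff (x : ℝ) (hx : 0 ≤ x) : gaussianQ x ≤ Real.exp (-x ^ 2 / 2) := by
  unfold gaussianQ
  have h2π : (0:ℝ) < Real.sqrt (2 * Real.pi) :=
    Real.sqrt_pos.2 (by positivity)
  set g : ℝ → ℝ := fun u => Real.exp (-x ^ 2 / 2) *
    ((1 / Real.sqrt (2 * Real.pi)) * Real.exp (-(1/2 : ℝ) * (u - x) ^ 2)) with hg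
  have hgint : Integrable g := by
    exact (((integrable_exp_neg_mul_sq (by norm_num : (0:ℝ) < 1/2)).comp_sub_right
      x).const_mul _).const_mul _
  have step1 : (∫ u in Set.Ioi x, (1 / Real.sqrt (2 * Real.pi)) * Real.exp (-u ^ 2 / 2))
      ≤ ∫ u in Set.Ioi x, g u := by
    refine integral_mono_of_nonneg ?_ hgint.integrableOn ?_
    · filter_upwards with u
      positivity
    · refine (ae_restrict_iff' measurableSet_Ioi).2 ?_
      filter_upwards with u hu
      have hxu : x ≤ u := le_of_lt hu
      calc (1 / Real.sqrt (2 * Real.pi)) * Real.exp (-u ^ 2 / 2)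
          ≤ (1 / Real.sqrt (2 * Real.pi)) *
              (Real.exp (-x ^ 2 / 2) * Real.exp (-(1/2 : ℝ) * (u - x) ^ 2)) := by
            apply mul_le_mul_of_nonneg_left _ (by positivity)
            rw [← Real.exp_add]
            apply Real.exp_le_exp.2
            nlinarith
        _ = g u := by rw [hg]; ring
  have step2 : ∫ u in Set.Ioi x, g u ≤ ∫ u, g u := by
    apply setIntegral_le_integral hgint
    filter_upwards with u
    positivity
  have step3 : ∫ u, g u = Real.exp (-x ^ 2 / 2) := by
    rw [hg]
    simp_rw [integral_const_mul]
    rw [shifted_gauss (1/2) x (by norm_num)]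
    rw [show Real.pi / (1/2 : ℝ) = 2 * Real.pi by ring]
    rw [one_div, inv_mul_cancel₀ (ne_of_gt h2π), mul_one]
  calc (∫ u in Set.Ioi x, (1 / Real.sqrt (2 * Real.pi)) * Real.exp (-u ^ 2 / 2))
      ≤ ∫ u in Set.Ioi x, g u := step1
    _ ≤ ∫ u, g u := step2
    _ = Real.exp (-x ^ 2 / 2) := step3

/-- finite-SNR pairwise error probability bound, equation (8) of the
paper, from the Chernoff bound `Q(x) ≤ e^{−x²/2}` and the exact Gaussian–Rician
integral: with `S = |a|² + |b|² > 0`, for every `ρ > 0`,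
`∫∫ Q(√ρ|a h_A + b h_B|/√2) f_K(h_A) f_K(h_B)
  ≤ ((K+1)/(K+1+ρS/4)) exp(−Kρ|a+b|²/(4(K+1)+ρS))`. -/
theorem fnc_pairwise_error_upper_bound
    (K : ℝ) (hK : 0 ≤ K) (a b : ℂ)
    (hS : 0 < ‖a‖ ^ 2 + ‖b‖ ^ 2)
    (ρ : ℝ) (hρ : 0 < ρ) :
    (∫ hA : ℂ, ∫ hB : ℂ,
        gaussianQ (Real.sqrt ρ * ‖a * hA + b * hB‖ / Real.sqrt 2) *
          ricianDensity K hA * ricianDensity K hB) ≤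
      ((K + 1) / (K + 1 + ρ * (‖a‖ ^ 2 + ‖b‖ ^ 2) / 4)) *
        Real.exp (-K * ρ * ‖a + b‖ ^ 2 /
          (4 * (K + 1) + ρ * (‖a‖ ^ 2 + ‖b‖ ^ 2))) := by
  have hπ := Real.pi_pos
  have hlam : (0:ℝ) < K + 1 := by linarith
  have ht : (0:ℝ) < ρ / 4 := by linarith
  set m : ℝ := Real.sqrt (K / (K + 1)) with hm
  have hm0 : 0 ≤ m := Real.sqrt_nonneg _
  have hm2 : m ^ 2 = K / (K + 1) := Real.sq_sqrt (div_nonneg hK hlam.le)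
  have hrd : ∀ h : ℂ, ricianDensity K h
      = ((K + 1) / Real.pi) * Real.exp (-(K + 1) * ‖h - (m : ℂ)‖ ^ 2) :=
    fun h => rfl
  have hrd0 : ∀ h : ℂ, 0 ≤ ricianDensity K h := fun h => by rw [hrd]; positivity
  set cb : ℝ := K + 1 + ρ / 4 * ‖b‖ ^ 2 with hcb
  have hcb0 : 0 < cb := by rw [hcb]; positivity
  set t2 : ℝ := (K + 1) * (ρ / 4) / cb with ht2def
  have ht2 : 0 ≤ t2 := by rw [ht2def]; positivity
  set ca : ℝ := K + 1 + t2 * ‖a‖ ^ 2 with hca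
  have hca0 : 0 < ca := by rw [hca]; positivity
  set innerBound : ℂ → ℝ := fun hA => ((K + 1) / cb) *
      (Real.exp (-t2 * ‖a * hA + b * (m : ℂ)‖ ^ 2) * ricianDensity K hA)
    with hib
  -- Step A : inner integral bound
  have stepA : ∀ hA : ℂ, (∫ hB : ℂ,
      gaussianQ (Real.sqrt ρ * ‖a * hA + b * hB‖ / Real.sqrt 2) *
        ricianDensity K hA * ricianDensity K hB) ≤ innerBound hA := by
    intro hA
    have hint : Integrable (fun hB : ℂ =>
        Real.exp (-(ρ / 4) * ‖b * hB + a * hA‖ ^ 2) *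
          (((K + 1) / Real.pi) * Real.exp (-(K + 1) * ‖hB - (m : ℂ)‖ ^ 2))) :=
      gauss_rician_integrable (K + 1) (ρ / 4) hlam ht.le m b (a * hA)
    have step1 : (∫ hB : ℂ,
        gaussianQ (Real.sqrt ρ * ‖a * hA + b * hB‖ / Real.sqrt 2) *
          ricianDensity K hA * ricianDensity K hB) ≤
        ∫ hB : ℂ, ricianDensity K hA *
          (Real.exp (-(ρ / 4) * ‖b * hB + a * hA‖ ^ 2) * ricianDensity K hB) := by
      refine integral_mono_of_nonneg ?_ (hint.const_mul (ricianDensity K hA)) ?_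
      · filter_upwards with hB
        have := gaussianQ_nonneg (Real.sqrt ρ * ‖a * hA + b * hB‖ / Real.sqrt 2)
        have h1 := hrd0 hA
        have h2 := hrd0 hB
        positivity
      · filter_upwards with hB
        have hx0 : 0 ≤ Real.sqrt ρ * ‖a * hA + b * hB‖ / Real.sqrt 2 := by
          positivity
        have hQ := gaussianQ_le_chernoff _ hx0
        have hxsq : -(Real.sqrt ρ * ‖a * hA + b * hB‖ / Real.sqrt 2) ^ 2 / 2
            = -(ρ / 4) * ‖b * hB + a * hA‖ ^ 2 := by
          rw [div_pow, mul_pow, Real.sq_sqrt hρ.le, Real.sq_sqrt (by norm_num : (0:ℝ) ≤ 2),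
            add_comm (b * hB) (a * hA)]
          ring
        rw [hxsq] at hQ
        calc gaussianQ (Real.sqrt ρ * ‖a * hA + b * hB‖ / Real.sqrt 2) *
              ricianDensity K hA * ricianDensity K hB
            ≤ Real.exp (-(ρ / 4) * ‖b * hB + a * hA‖ ^ 2) *
              ricianDensity K hA * ricianDensity K hB := by
              exact mul_le_mul_of_nonneg_right
                (mul_le_mul_of_nonneg_right hQ (hrd0 hA)) (hrd0 hB)
          _ = ricianDensity K hA *
              (Real.exp (-(ρ / 4) * ‖b * hB + a * hA‖ ^ 2) *
                ricianDensity K hB) := by ring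
    have step2 : (∫ hB : ℂ, ricianDensity K hA *
        (Real.exp (-(ρ / 4) * ‖b * hB + a * hA‖ ^ 2) * ricianDensity K hB))
        = innerBound hA := by
      simp_rw [hrd]
      rw [integral_const_mul,
        gauss_rician_integral (K + 1) (ρ / 4) hlam ht.le m b (a * hA)]
      rw [hib]
      have habs : b * (m : ℂ) + a * hA = a * hA + b * (m : ℂ) := by ring
      have hexp : -((K + 1) * (ρ / 4) * ‖b * (m : ℂ) + a * hA‖ ^ 2) /
          (K + 1 + ρ / 4 * ‖b‖ ^ 2)
          = -t2 * ‖a * hA + b * (m : ℂ)‖ ^ 2 := by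
        rw [habs, ht2def, ← hcb]
        field_simp
      rw [← hcb, hexp, ← hrd]
      ring
    exact le_of_le_of_eq step1 step2
  -- Step B : outer bound
  have stepB : (∫ hA : ℂ, ∫ hB : ℂ,
      gaussianQ (Real.sqrt ρ * ‖a * hA + b * hB‖ / Real.sqrt 2) *
        ricianDensity K hA * ricianDensity K hB) ≤ ∫ hA : ℂ, innerBound hA := by
    refine integral_mono_of_nonneg ?_ ?_ ?_
    · filter_upwards with hA
      refine integral_nonneg fun hB => ?_
      have := gaussianQ_nonneg (Real.sqrt ρ * ‖a * hA + b * hB‖ / Real.sqrt 2)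
      have h1 := hrd0 hA
      have h2 := hrd0 hB
      positivity
    · exact ((gauss_rician_integrable (K + 1) t2 hlam ht2 m a (b * (m : ℂ))).const_mul
        ((K + 1) / cb))
    · filter_upwards with hA using stepA hA
  -- Step C : compute the outer integral
  have stepC : (∫ hA : ℂ, innerBound hA) = ((K + 1) / cb) *
      (((K + 1) / ca) * Real.exp (-((K + 1) * t2 * ‖a * (m : ℂ) + b * (m : ℂ)‖ ^ 2) / ca)) := by
    rw [hib]
    simp_rw [hrd]
    rw [integral_const_mul, gauss_rician_integral (K + 1) t2 hlam ht2 m a (b * (m : ℂ)), ← hca]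
  rw [stepC] at stepB
  refine le_trans stepB (le_of_eq ?_)
  -- Step D : arithmetic
  have habsm : ‖a * (m : ℂ) + b * (m : ℂ)‖ ^ 2
      = ‖a + b‖ ^ 2 * m ^ 2 := by
    rw [show a * (m : ℂ) + b * (m : ℂ) = (a + b) * (m : ℂ) by ring, norm_mul,
      Complex.norm_real, Real.norm_eq_abs, abs_of_nonneg hm0, mul_pow]
  rw [habsm, hm2]
  have hd1 : (0:ℝ) < K + 1 + ρ * (‖a‖ ^ 2 + ‖b‖ ^ 2) / 4 := by positivity
  have hd2 : (0:ℝ) < 4 * (K + 1) + ρ * (‖a‖ ^ 2 + ‖b‖ ^ 2) := by positivity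
  have hpre : (K + 1) / cb * ((K + 1) / ca)
      = (K + 1) / (K + 1 + ρ * (‖a‖ ^ 2 + ‖b‖ ^ 2) / 4) := by
    rw [hca, ht2def, hcb]
    field_simp
    ring
  have hexp : -((K + 1) * t2 * (‖a + b‖ ^ 2 * (K / (K + 1)))) / ca
      = -K * ρ * ‖a + b‖ ^ 2 /
        (4 * (K + 1) + ρ * (‖a‖ ^ 2 + ‖b‖ ^ 2)) := by
    rw [hca, ht2def, hcb]
    field_simp
    ring
  rw [hexp, ← mul_assoc, hpre]
end
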